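/- arXiv:1806.11351 — 2 statements merged into one kernel-verified Lean document; each statement's English description precedes it below -/
import Mathlib

section
/- Let N \ge 1 and let (T^1, W^1), \ldots, (T^N, W^N) be i.i.d. pairs, where each W^\kappa is a real-valued centered Gaussian process with E[W^\kappa_u] = 0, E[W^\kappa_u W^\kappa_v] = min(u,v), continuous sample paths and joint measurability, each T^\kappa > 0 has distribution q on (0,\infty) with \int_0^\infty \tau\, q(d\tau) < \infty and is independent of W^\kappa, and the N pairs are mutually independent. Let \Lambda \ge 0 be an integrable random variable independent of the whole family. Define Y^\kappa_t = e^{-t/T^\kappa} W^\kappa_{T^\kappa(e^{2t/T^\kappa}-1)} and Z_t = \sqrt{\Lambda} \sum_{\kappa=1}^N Y^\kappa_t. Then for all s,t \ge 0: E[Z_t Z_s] = N\, E[\Lambda] \int_0^\infty \tau\,(e^{-|t-s|/\tau} - e^{-(t+s)/\tau})\, q(d\tau). In particular the correlation of Z_t is in general non-exponential in |t-s|, being a q-mixture of exponentials. -/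
open MeasureTheory ProbabilityTheory
open scoped NNReal

abbrev ContPath : Type := {f : ℝ → ℝ // Continuous f}



lemma aux_integrable_sq_gaussianReal (v : ℝ≥0) :
    Integrable (fun x : ℝ => x ^ 2) (gaussianReal 0 v) := by
  by_cases hv : v = 0
  · rw [hv, gaussianReal_zero_var]
    have h0 : (fun x : ℝ => x ^ 2) =ᵐ[Measure.dirac (0:ℝ)] (fun _ => (0:ℝ)) := by
      rw [Filter.EventuallyEq, ae_dirac_eq]
      simp
    exact (integrable_const (0:ℝ)).congr h0.symm
  rw [gaussianReal_of_var_ne_zero _ hv]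
  rw [integrable_withDensity_iff (measurable_gaussianPDF _ _)
    (ae_of_all _ fun x => ENNReal.ofReal_lt_top)]
  have h : Integrable (fun x : ℝ => x ^ (2:ℝ) * Real.exp (-(2*(v:ℝ))⁻¹ * x^2)) :=
    integrable_rpow_mul_exp_neg_mul_sq (by positivity) (by norm_num)
  have h2 : Integrable (fun x : ℝ => x ^ (2:ℕ) * Real.exp (-(2*(v:ℝ))⁻¹ * x^2)) := by
    have : (fun x : ℝ => x ^ (2:ℝ) * Real.exp (-(2*(v:ℝ))⁻¹ * x^2))
        = (fun x : ℝ => x ^ (2:ℕ) * Real.exp (-(2*(v:ℝ))⁻¹ * x^2)) := by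
      ext x; rw [← Real.rpow_natCast x 2]; norm_num
    rwa [this] at h
  have heq : (fun x : ℝ => x ^ 2 * ((gaussianPDF 0 v x).toReal))
      = fun x : ℝ => (Real.sqrt (2 * Real.pi * v))⁻¹ *
        (x ^ (2:ℕ) * Real.exp (-(2*(v:ℝ))⁻¹ * x ^ 2)) := by
    ext x
    rw [gaussianPDF, ENNReal.toReal_ofReal (gaussianPDFReal_nonneg _ _ _), gaussianPDFReal]
    rw [sub_zero]
    have hv' : (v:ℝ) ≠ 0 := by exact_mod_cast hv
    have harg : -x^2/(2*(v:ℝ)) = -(2*(v:ℝ))⁻¹ * x^2 := by field_simp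
    rw [harg]; ring
  rw [heq]
  exact h2.const_mul _


lemma aux_eval_measurable :
    Measurable (fun p : ℝ × ContPath => (p.2 : ℝ → ℝ) p.1) := by
  have key : ∀ n : ℕ, Measurable
      (fun p : ℝ × ContPath => (p.2 : ℝ → ℝ) ((⌈p.1 * 2 ^ n⌉ : ℝ) / 2 ^ n)) := by
    intro n
    have h1 : Measurable (fun q : ContPath × ℤ => (q.1 : ℝ → ℝ) ((q.2 : ℝ) / 2 ^ n)) := by
      apply measurable_from_prod_countable_left
      intro k
      exact (measurable_pi_apply ((k : ℝ) / 2 ^ n)).comp measurable_subtype_coe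
    exact h1.comp (measurable_snd.prodMk
      (Int.measurable_ceil.comp (measurable_fst.mul_const _)))
  apply measurable_of_tendsto_metrizable key
  rw [tendsto_pi_nhds]
  intro p
  have hx : Filter.Tendsto (fun n : ℕ => (⌈p.1 * 2 ^ n⌉ : ℝ) / 2 ^ n)
      Filter.atTop (nhds p.1) := by
    have hup : Filter.Tendsto (fun n : ℕ => p.1 + (1 / 2 : ℝ) ^ n) Filter.atTop (nhds p.1) := by
      have := tendsto_pow_atTop_nhds_zero_of_lt_one (by norm_num : (0:ℝ) ≤ 1/2) (by norm_num)
      simpa using (tendsto_const_nhds (x := p.1)).add this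
    refine tendsto_of_tendsto_of_tendsto_of_le_of_le tendsto_const_nhds hup ?_ ?_
    · intro n
      rw [le_div_iff₀ (by positivity : (0:ℝ) < 2 ^ n)]
      exact Int.le_ceil _
    · intro n
      rw [div_le_iff₀ (by positivity : (0:ℝ) < 2 ^ n)]
      have h1 := Int.ceil_lt_add_one (p.1 * 2 ^ n)
      have h2 : ((1:ℝ)/2)^n * 2^n = 1 := by
        rw [div_pow, one_pow, div_mul_cancel₀]
        positivity
      nlinarith [h1, h2]
  exact ((p.2.2.tendsto p.1).comp hx)

lemma aux_indep_transfer {Ω α α' β : Type*} [MeasurableSpace Ω] {μ : Measure Ω}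
    [mα : MeasurableSpace α] [mα' : MeasurableSpace α'] [mβ : MeasurableSpace β]
    (j : α' → α) (hj : mα' = mα.comap j)
    {f : Ω → β} {g : Ω → α} {g' : Ω → α'}
    (hg : ∀ ω, j (g' ω) = g ω)
    (h : IndepFun f g μ) : IndepFun f g' μ := by
  rw [indepFun_iff_measure_inter_preimage_eq_mul] at h ⊢
  intro s t hs ht
  rw [hj] at ht
  obtain ⟨t', ht', rfl⟩ := ht
  have : g' ⁻¹' (j ⁻¹' t') = g ⁻¹' t' := by
    ext ω; simp [Set.mem_preimage, hg ω]
  rw [this]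
  exact h s t' hs ht'

lemma aux_comap_prodmap {α β β' : Type*} [mα : MeasurableSpace α] [mβ : MeasurableSpace β]
    [mβ' : MeasurableSpace β'] (j : β' → β) (hj : mβ' = mβ.comap j) :
    (inferInstance : MeasurableSpace (α × β')) =
      MeasurableSpace.comap (Prod.map id j) inferInstance := by
  show mα.comap Prod.fst ⊔ mβ'.comap Prod.snd
      = MeasurableSpace.comap (Prod.map id j) (mα.comap Prod.fst ⊔ mβ.comap Prod.snd)
  rw [MeasurableSpace.comap_sup, MeasurableSpace.comap_comp, MeasurableSpace.comap_comp, hj,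
    MeasurableSpace.comap_comp]
  rfl

lemma aux_comap_pimap {ι β β' : Type*} [mβ : MeasurableSpace β]
    [mβ' : MeasurableSpace β'] (j : β' → β) (hj : mβ' = mβ.comap j) :
    (inferInstance : MeasurableSpace (ι → β')) =
      MeasurableSpace.comap (fun (x : ι → β') (i : ι) => j (x i)) inferInstance := by
  show (⨆ i : ι, mβ'.comap fun x => x i)
      = MeasurableSpace.comap (fun (x : ι → β') (i : ι) => j (x i)) (⨆ i : ι, mβ.comap fun x => x i)
  rw [MeasurableSpace.comap_iSup]
  refine iSup_congr fun i => ?_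
  rw [MeasurableSpace.comap_comp, hj, MeasurableSpace.comap_comp]
  rfl



noncomputable def auxPhi (t : ℝ) (p : ℝ × ContPath) : ℝ :=
  Real.exp (-t / p.1) * (p.2 : ℝ → ℝ) (p.1 * (Real.exp (2 * t / p.1) - 1))

lemma auxPhi_measurable (t : ℝ) : Measurable (auxPhi t) := by
  apply Measurable.mul
  · exact (measurable_const.div measurable_fst).exp
  · exact aux_eval_measurable.comp
      ((measurable_fst.mul (((measurable_const.div measurable_fst).exp).sub
        measurable_const)).prodMk measurable_snd)

lemma aux_ae_pos {q : Measure ℝ} (hq : q (Set.Iic 0) = 0) : ∀ᵐ τ ∂q, 0 < τ := by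
  rw [ae_iff]
  convert hq using 2
  ext τ; simp

lemma aTime_nonneg {τ t : ℝ} (hτ : 0 < τ) (ht : 0 ≤ t) :
    0 ≤ τ * (Real.exp (2 * t / τ) - 1) := by
  have : (1:ℝ) ≤ Real.exp (2 * t / τ) := by
    rw [← Real.exp_zero]
    exact Real.exp_le_exp.mpr (by positivity)
  nlinarith

lemma aTime_le {τ t : ℝ} (hτ : 0 < τ) :
    τ * (Real.exp (2 * t / τ) - 1) ≤ τ * Real.exp (2 * t / τ) := by
  nlinarith [Real.exp_pos (2 * t / τ)]

lemma aux_exp_sq_mul_le {τ t : ℝ} (hτ : 0 < τ) (ht : 0 ≤ t) :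
    Real.exp (-t / τ) * Real.exp (-t / τ) * (τ * (Real.exp (2 * t / τ) - 1)) ≤ τ := by
  have h1 : Real.exp (-t / τ) * Real.exp (-t / τ) * (τ * (Real.exp (2 * t / τ) - 1))
      ≤ Real.exp (-t / τ) * Real.exp (-t / τ) * (τ * Real.exp (2 * t / τ)) := by
    have := aTime_le (t := t) hτ
    have h2 : (0:ℝ) < Real.exp (-t / τ) * Real.exp (-t / τ) := by positivity
    nlinarith
  refine h1.trans ?_
  have : Real.exp (-t / τ) * Real.exp (-t / τ) * (τ * Real.exp (2 * t / τ)) = τ := by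
    rw [← Real.exp_add]
    rw [mul_comm τ, ← mul_assoc, ← Real.exp_add]
    have : -t / τ + -t / τ + 2 * t / τ = 0 := by field_simp; ring
    rw [this, Real.exp_zero, one_mul]
  linarith [this.le, this.ge]

variable {q : Measure ℝ} [IsProbabilityMeasure q] {ρ : Measure ContPath} [IsProbabilityMeasure ρ]

lemma aux_phi_int_one (hq : q (Set.Iic 0) = 0) (hqint : Integrable (fun τ : ℝ => τ) q)
    (hint1 : ∀ u : ℝ, 0 ≤ u → Integrable (fun f : ContPath => (f : ℝ → ℝ) u) ρ)
    (hint2 : ∀ u v : ℝ, 0 ≤ u → 0 ≤ v →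
      Integrable (fun f : ContPath => (f : ℝ → ℝ) u * (f : ℝ → ℝ) v) ρ)
    (hcov : ∀ u v : ℝ, 0 ≤ u → 0 ≤ v →
      ∫ f : ContPath, (f : ℝ → ℝ) u * (f : ℝ → ℝ) v ∂ρ = min u v)
    (hmean : ∀ u : ℝ, 0 ≤ u → ∫ f : ContPath, (f : ℝ → ℝ) u ∂ρ = 0)
    (t : ℝ) (ht : 0 ≤ t) :
    Integrable (auxPhi t) (q.prod ρ) ∧ ∫ p, auxPhi t p ∂(q.prod ρ) = 0 := by
  have hInt : Integrable (auxPhi t) (q.prod ρ) := by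
    refine (integrable_prod_iff (auxPhi_measurable t).aestronglyMeasurable).mpr ⟨?_, ?_⟩
    · filter_upwards [aux_ae_pos hq] with τ hτ
      show Integrable
        (fun f : ContPath => Real.exp (-t / τ) *
          (f : ℝ → ℝ) (τ * (Real.exp (2 * t / τ) - 1))) ρ
      exact (hint1 _ (aTime_nonneg hτ ht)).const_mul _
    · refine Integrable.mono' (((integrable_const (1:ℝ)).add hqint).div_const 2)
        ((auxPhi_measurable t).aestronglyMeasurable.norm.integral_prod_right') ?_
      filter_upwards [aux_ae_pos hq] with τ hτ
      set e := Real.exp (-t / τ) with he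
      set u := τ * (Real.exp (2 * t / τ) - 1) with hu
      have hu0 : 0 ≤ u := aTime_nonneg hτ ht
      have hb : ∀ f : ContPath, ‖auxPhi t (τ, f)‖
          ≤ (1 + e * e * ((f : ℝ → ℝ) u * (f : ℝ → ℝ) u)) / 2 := by
        intro f
        show ‖e * (f : ℝ → ℝ) u‖ ≤ _
        rw [Real.norm_eq_abs, abs_mul, abs_of_pos (Real.exp_pos _)]
        nlinarith [sq_nonneg (1 - e * |(f : ℝ → ℝ) u|), abs_mul_abs_self ((f : ℝ → ℝ) u),
          abs_nonneg ((f : ℝ → ℝ) u), Real.exp_pos (-t / τ)]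
      have hbint : Integrable
          (fun f : ContPath => (1 + e * e * ((f : ℝ → ℝ) u * (f : ℝ → ℝ) u)) / 2) ρ :=
        ((integrable_const (1:ℝ)).add ((hint2 u u hu0 hu0).const_mul _)).div_const 2
      calc ‖∫ f, ‖auxPhi t (τ, f)‖ ∂ρ‖
          = ∫ f, ‖auxPhi t (τ, f)‖ ∂ρ :=
            Real.norm_of_nonneg (integral_nonneg fun f => norm_nonneg _)
        _ ≤ ∫ f : ContPath, (1 + e * e * ((f : ℝ → ℝ) u * (f : ℝ → ℝ) u)) / 2 ∂ρ :=
            integral_mono_of_nonneg (ae_of_all _ fun f => norm_nonneg _) hbint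
              (ae_of_all _ hb)
        _ = (1 + e * e * min u u) / 2 := by
            rw [integral_div, integral_add (integrable_const _)
              ((hint2 u u hu0 hu0).const_mul _), integral_const, integral_const_mul,
              hcov u u hu0 hu0]
            simp
        _ ≤ (1 + τ) / 2 := by
            have := aux_exp_sq_mul_le hτ ht
            rw [min_self]
            rw [he, hu] at *
            linarith
  refine ⟨hInt, ?_⟩
  rw [integral_prod _ hInt]
  have h0 : (fun τ => ∫ f, auxPhi t (τ, f) ∂ρ) =ᵐ[q] fun _ => 0 := by
    filter_upwards [aux_ae_pos hq] with τ hτ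
    have : ∫ f, auxPhi t (τ, f) ∂ρ
        = Real.exp (-t / τ) * ∫ f : ContPath, (f : ℝ → ℝ) (τ * (Real.exp (2 * t / τ) - 1)) ∂ρ := by
      simp only [auxPhi]
      exact integral_const_mul _ _
    rw [this, hmean _ (aTime_nonneg hτ ht), mul_zero]
  rw [integral_congr_ae h0, integral_const]
  simp

lemma aux_min_aTime {τ t s : ℝ} (hτ : 0 < τ) :
    min (τ * (Real.exp (2 * t / τ) - 1)) (τ * (Real.exp (2 * s / τ) - 1))
      = τ * (Real.exp (2 * min t s / τ) - 1) := by
  have hmono : ∀ a b : ℝ, a ≤ b →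
      τ * (Real.exp (2 * a / τ) - 1) ≤ τ * (Real.exp (2 * b / τ) - 1) := by
    intro a b hab
    have : Real.exp (2 * a / τ) ≤ Real.exp (2 * b / τ) :=
      Real.exp_le_exp.mpr ((div_le_div_iff_of_pos_right hτ).mpr (by linarith))
    nlinarith
  rcases le_total t s with h | h
  · rw [min_eq_left (hmono t s h), min_eq_left h]
  · rw [min_eq_right (hmono s t h), min_eq_right h]

lemma aux_exp_min_formula {τ t s : ℝ} (hτ : 0 < τ) :
    Real.exp (-t / τ) * Real.exp (-s / τ) * (τ * (Real.exp (2 * min t s / τ) - 1))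
      = τ * (Real.exp (-|t - s| / τ) - Real.exp (-(t + s) / τ)) := by
  have he1 : Real.exp (-t / τ) * Real.exp (-s / τ) = Real.exp (-(t + s) / τ) := by
    rw [← Real.exp_add]; congr 1; ring
  have he2 : Real.exp (-(t + s) / τ) * Real.exp (2 * min t s / τ)
      = Real.exp (-|t - s| / τ) := by
    rw [← Real.exp_add]; congr 1
    rcases le_total t s with h | h
    · rw [min_eq_left h, abs_of_nonpos (by linarith : t - s ≤ 0)]; ring
    · rw [min_eq_right h, abs_of_nonneg (by linarith : 0 ≤ t - s)]; ring
  calc Real.exp (-t / τ) * Real.exp (-s / τ) * (τ * (Real.exp (2 * min t s / τ) - 1))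
      = τ * (Real.exp (-t / τ) * Real.exp (-s / τ) * Real.exp (2 * min t s / τ)
          - Real.exp (-t / τ) * Real.exp (-s / τ)) := by ring
    _ = τ * (Real.exp (-|t - s| / τ) - Real.exp (-(t + s) / τ)) := by
        rw [he1, he2]

lemma aux_phi_int_two (hq : q (Set.Iic 0) = 0) (hqint : Integrable (fun τ : ℝ => τ) q)
    (hint2 : ∀ u v : ℝ, 0 ≤ u → 0 ≤ v →
      Integrable (fun f : ContPath => (f : ℝ → ℝ) u * (f : ℝ → ℝ) v) ρ)
    (hcov : ∀ u v : ℝ, 0 ≤ u → 0 ≤ v →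
      ∫ f : ContPath, (f : ℝ → ℝ) u * (f : ℝ → ℝ) v ∂ρ = min u v)
    (t s : ℝ) (ht : 0 ≤ t) (hs : 0 ≤ s) :
    Integrable (fun p => auxPhi t p * auxPhi s p) (q.prod ρ) ∧
    ∫ p, auxPhi t p * auxPhi s p ∂(q.prod ρ)
      = ∫ τ, τ * (Real.exp (-|t - s| / τ) - Real.exp (-(t + s) / τ)) ∂q := by
  have hmeas : Measurable (fun p => auxPhi t p * auxPhi s p) :=
    (auxPhi_measurable t).mul (auxPhi_measurable s)
  have hsect : ∀ τ : ℝ, (fun f : ContPath => auxPhi t (τ, f) * auxPhi s (τ, f))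
      = fun f : ContPath => (Real.exp (-t / τ) * Real.exp (-s / τ)) *
        ((f : ℝ → ℝ) (τ * (Real.exp (2 * t / τ) - 1)) *
         (f : ℝ → ℝ) (τ * (Real.exp (2 * s / τ) - 1))) := by
    intro τ; funext f; simp only [auxPhi]; ring
  have hInt : Integrable (fun p => auxPhi t p * auxPhi s p) (q.prod ρ) := by
    refine (integrable_prod_iff hmeas.aestronglyMeasurable).mpr ⟨?_, ?_⟩
    · filter_upwards [aux_ae_pos hq] with τ hτ
      rw [hsect τ]
      exact (hint2 _ _ (aTime_nonneg hτ ht) (aTime_nonneg hτ hs)).const_mul _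
    · refine Integrable.mono' hqint
        (hmeas.aestronglyMeasurable.norm.integral_prod_right') ?_
      filter_upwards [aux_ae_pos hq] with τ hτ
      set et := Real.exp (-t / τ) with het
      set es := Real.exp (-s / τ) with hes
      set u := τ * (Real.exp (2 * t / τ) - 1) with hu
      set v := τ * (Real.exp (2 * s / τ) - 1) with hv
      have hu0 : 0 ≤ u := aTime_nonneg hτ ht
      have hv0 : 0 ≤ v := aTime_nonneg hτ hs
      have hb : ∀ f : ContPath, ‖auxPhi t (τ, f) * auxPhi s (τ, f)‖
          ≤ (et * et * ((f : ℝ → ℝ) u * (f : ℝ → ℝ) u)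
            + es * es * ((f : ℝ → ℝ) v * (f : ℝ → ℝ) v)) / 2 := by
        intro f
        show ‖(et * (f : ℝ → ℝ) u) * (es * (f : ℝ → ℝ) v)‖ ≤ _
        rw [Real.norm_eq_abs, abs_mul, abs_mul, abs_mul,
          abs_of_pos (Real.exp_pos _), abs_of_pos (Real.exp_pos _)]
        nlinarith [sq_nonneg (et * |(f : ℝ → ℝ) u| - es * |(f : ℝ → ℝ) v|),
          abs_mul_abs_self ((f : ℝ → ℝ) u), abs_mul_abs_self ((f : ℝ → ℝ) v),
          abs_nonneg ((f : ℝ → ℝ) u), abs_nonneg ((f : ℝ → ℝ) v),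
          Real.exp_pos (-t / τ), Real.exp_pos (-s / τ)]
      have hbint : Integrable (fun f : ContPath =>
          (et * et * ((f : ℝ → ℝ) u * (f : ℝ → ℝ) u)
            + es * es * ((f : ℝ → ℝ) v * (f : ℝ → ℝ) v)) / 2) ρ :=
        (((hint2 u u hu0 hu0).const_mul _).add ((hint2 v v hv0 hv0).const_mul _)).div_const 2
      calc ‖∫ f, ‖auxPhi t (τ, f) * auxPhi s (τ, f)‖ ∂ρ‖
          = ∫ f, ‖auxPhi t (τ, f) * auxPhi s (τ, f)‖ ∂ρ :=
            Real.norm_of_nonneg (integral_nonneg fun f => norm_nonneg _)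
        _ ≤ ∫ f : ContPath, (et * et * ((f : ℝ → ℝ) u * (f : ℝ → ℝ) u)
            + es * es * ((f : ℝ → ℝ) v * (f : ℝ → ℝ) v)) / 2 ∂ρ :=
            integral_mono_of_nonneg (ae_of_all _ fun f => norm_nonneg _) hbint
              (ae_of_all _ hb)
        _ = (et * et * min u u + es * es * min v v) / 2 := by
            rw [integral_div, integral_add ((hint2 u u hu0 hu0).const_mul _)
              ((hint2 v v hv0 hv0).const_mul _), integral_const_mul, integral_const_mul,
              hcov u u hu0 hu0, hcov v v hv0 hv0]
        _ ≤ τ := by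
            have h1 := aux_exp_sq_mul_le hτ ht
            have h2 := aux_exp_sq_mul_le hτ hs
            rw [min_self, min_self]
            rw [het, hes, hu, hv] at *
            linarith
  refine ⟨hInt, ?_⟩
  rw [integral_prod _ hInt]
  refine integral_congr_ae ?_
  filter_upwards [aux_ae_pos hq] with τ hτ
  have h1 : ∫ f, auxPhi t (τ, f) * auxPhi s (τ, f) ∂ρ
      = (Real.exp (-t / τ) * Real.exp (-s / τ)) *
        ((min (τ * (Real.exp (2 * t / τ) - 1)) (τ * (Real.exp (2 * s / τ) - 1)))) := by
    rw [hsect τ, integral_const_mul,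
      hcov _ _ (aTime_nonneg hτ ht) (aTime_nonneg hτ hs)]
  rw [h1, aux_min_aTime hτ, aux_exp_min_formula hτ]
/-- For `N` i.i.d. pairs `(T^κ, W^κ)` of a relaxation time `T^κ` with law `q` on `(0,∞)`
(with `∫ τ q(dτ) < ∞`) independent of a Wiener process `W^κ`, and an integrable nonnegative
random amplitude `Λ` independent of the whole family, the centre-of-mass like process
`Z_t = √Λ ∑_κ Y^κ_t`, with `Y^κ_t = e^{-t/T^κ} W^κ_{T^κ(e^{2t/T^κ}-1)}`, has the
non-exponential two-time correlation
`E[Z_t Z_s] = N E[Λ] ∫ τ (e^{-|t-s|/τ} - e^{-(t+s)/τ}) q(dτ)`: a `q`-mixture of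
exponentials. -/
theorem com_correlation_mixture
    {Ω : Type*} [MeasurableSpace Ω] (μ : Measure Ω) [IsProbabilityMeasure μ]
    (N : ℕ) (hN : 0 < N)
    (q : Measure ℝ) [IsProbabilityMeasure q] (hq : q (Set.Iic 0) = 0)
    (hqint : Integrable (fun τ : ℝ => τ) q)
    (T : Fin N → Ω → ℝ) (W : Fin N → ℝ → Ω → ℝ)
    (hTmeas : ∀ κ, Measurable (T κ))
    (hWmeas : ∀ κ, Measurable (Function.uncurry (W κ)))
    (hWcont : ∀ κ ω, Continuous (fun u => W κ u ω))
    -- each `W^κ` is a centered Gaussian process: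
    (hWgauss : ∀ κ u, 0 ≤ u → Measure.map (W κ u) μ = gaussianReal 0 (Real.toNNReal u))
    (hWmean : ∀ κ u, 0 ≤ u → ∫ ω, W κ u ω ∂μ = 0)
    (hWcov : ∀ κ u v, 0 ≤ u → 0 ≤ v → ∫ ω, W κ u ω * W κ v ω ∂μ = min u v)
    (hTpos : ∀ κ, ∀ᵐ ω ∂μ, 0 < T κ ω)
    (hTlaw : ∀ κ, Measure.map (T κ) μ = q)
    -- within each pair, `T^κ` is independent of the process `W^κ`:
    (hTW : ∀ κ, IndepFun (T κ) (fun ω => fun u => W κ u ω) μ)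
    -- the `N` pairs are mutually independent:
    (hindep : iIndepFun
      (fun κ ω => (T κ ω, fun u => W κ u ω)) μ)
    -- and identically distributed:
    (hident : ∀ κ, Measure.map (fun ω => (T κ ω, fun u => W κ u ω)) μ
      = Measure.map (fun ω => (T ⟨0, hN⟩ ω, fun u => W ⟨0, hN⟩ u ω)) μ)
    (Λ : Ω → ℝ) (hΛmeas : Measurable Λ) (hΛnn : ∀ᵐ ω ∂μ, 0 ≤ Λ ω)
    (hΛint : Integrable Λ μ)
    -- `Λ` is independent of the whole family:
    (hΛindep : IndepFun Λ (fun ω => fun κ => (T κ ω, fun u => W κ u ω)) μ)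
    (Y : Fin N → ℝ → Ω → ℝ)
    (hY : ∀ κ t ω, Y κ t ω =
      Real.exp (-t / T κ ω) * W κ (T κ ω * (Real.exp (2 * t / T κ ω) - 1)) ω)
    (Z : ℝ → Ω → ℝ)
    (hZ : ∀ t ω, Z t ω = Real.sqrt (Λ ω) * ∑ κ, Y κ t ω) :
    ∀ s t : ℝ, 0 ≤ s → 0 ≤ t →
      (∫ ω, Z t ω * Z s ω ∂μ) =
        N * (∫ ω, Λ ω ∂μ) *
          ∫ τ, τ * (Real.exp (-|t - s| / τ) - Real.exp (-(t + s) / τ)) ∂q := by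
  intro s t hs ht
  -- continuous-path valued processes
  set pc : Fin N → Ω → ContPath := fun κ ω => ⟨fun u => W κ u ω, hWcont κ ω⟩ with hpc_def
  have hpc_meas : ∀ κ, Measurable (pc κ) := by
    intro κ
    apply Measurable.subtype_mk
    apply measurable_pi_lambda
    intro u
    exact (hWmeas κ).comp (measurable_const.prodMk measurable_id)
  have hWu_meas : ∀ κ u, Measurable (W κ u) := fun κ u =>
    (hWmeas κ).comp (measurable_const.prodMk measurable_id)
  set pairS : Fin N → Ω → ℝ × ContPath := fun κ ω => (T κ ω, pc κ ω) with hpairS_def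
  have hpairS_meas : ∀ κ, Measurable (pairS κ) := fun κ =>
    (hTmeas κ).prodMk (hpc_meas κ)
  -- moments of W transferred
  have hWmem : ∀ κ u, 0 ≤ u → MemLp (W κ u) 2 μ := by
    intro κ u hu
    have h1 : MemLp (id : ℝ → ℝ) 2 (gaussianReal 0 (Real.toNNReal u)) := by
      refine (memLp_two_iff_integrable_sq aestronglyMeasurable_id).mpr ?_
      simpa using aux_integrable_sq_gaussianReal (Real.toNNReal u)
    have h2 : MemLp (id : ℝ → ℝ) 2 (Measure.map (W κ u) μ) := by
      rw [hWgauss κ u hu]; exact h1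
    have h3 := (memLp_map_measure_iff aestronglyMeasurable_id
      (hWu_meas κ u).aemeasurable).mp h2
    simpa [Function.id_comp] using h3
  have hWint : ∀ κ u, 0 ≤ u → Integrable (W κ u) μ := fun κ u hu =>
    (hWmem κ u hu).integrable (by norm_num)
  have hWsq : ∀ κ u, 0 ≤ u → Integrable (fun ω => W κ u ω ^ 2) μ := fun κ u hu =>
    (hWmem κ u hu).integrable_sq
  have hWmul : ∀ κ u v, 0 ≤ u → 0 ≤ v →
      Integrable (fun ω => W κ u ω * W κ v ω) μ := by
    intro κ u v hu hv
    refine Integrable.mono' ((hWsq κ u hu).add (hWsq κ v hv))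
      ((hWu_meas κ u).mul (hWu_meas κ v)).aestronglyMeasurable ?_
    refine ae_of_all _ fun ω => ?_
    simp only [Pi.add_apply]
    rw [Real.norm_eq_abs, abs_mul]
    nlinarith [sq_nonneg (|W κ u ω| - |W κ v ω|), abs_mul_abs_self (W κ u ω),
      abs_mul_abs_self (W κ v ω), abs_nonneg (W κ u ω), abs_nonneg (W κ v ω),
      sq_abs (W κ u ω), sq_abs (W κ v ω)]
  -- the path law
  set ρ : Fin N → Measure ContPath := fun κ => Measure.map (pc κ) μ with hρ_def
  haveI hρprob : ∀ κ, IsProbabilityMeasure (ρ κ) := fun κ =>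
    Measure.isProbabilityMeasure_map (hpc_meas κ).aemeasurable
  have heval_meas : ∀ u : ℝ, Measurable fun f : ContPath => (f : ℝ → ℝ) u := fun u =>
    (measurable_pi_apply u).comp measurable_subtype_coe
  have hint1 : ∀ κ, ∀ u : ℝ, 0 ≤ u → Integrable (fun f : ContPath => (f : ℝ → ℝ) u) (ρ κ) := by
    intro κ u hu
    rw [hρ_def]
    rw [integrable_map_measure (heval_meas u).aestronglyMeasurable (hpc_meas κ).aemeasurable]
    exact hWint κ u hu
  have hint2 : ∀ κ, ∀ u v : ℝ, 0 ≤ u → 0 ≤ v →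
      Integrable (fun f : ContPath => (f : ℝ → ℝ) u * (f : ℝ → ℝ) v) (ρ κ) := by
    intro κ u v hu hv
    rw [hρ_def]
    rw [integrable_map_measure (show Measurable fun f : ContPath => (f : ℝ → ℝ) u * (f : ℝ → ℝ) v
        from (heval_meas u).mul (heval_meas v)).aestronglyMeasurable
      (hpc_meas κ).aemeasurable]
    exact hWmul κ u v hu hv
  have hcovρ : ∀ κ, ∀ u v : ℝ, 0 ≤ u → 0 ≤ v →
      ∫ f : ContPath, (f : ℝ → ℝ) u * (f : ℝ → ℝ) v ∂(ρ κ) = min u v := by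
    intro κ u v hu hv
    rw [hρ_def]
    rw [integral_map (hpc_meas κ).aemeasurable
      (show Measurable fun f : ContPath => (f : ℝ → ℝ) u * (f : ℝ → ℝ) v
        from (heval_meas u).mul (heval_meas v)).aestronglyMeasurable]
    exact hWcov κ u v hu hv
  have hmeanρ : ∀ κ, ∀ u : ℝ, 0 ≤ u →
      ∫ f : ContPath, (f : ℝ → ℝ) u ∂(ρ κ) = 0 := by
    intro κ u hu
    rw [hρ_def]
    rw [integral_map (hpc_meas κ).aemeasurable (heval_meas u).aestronglyMeasurable]
    exact hWmean κ u hu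
  -- independence of T and the path, in ContPath form
  have hTpc : ∀ κ, IndepFun (T κ) (pc κ) μ := fun κ =>
    aux_indep_transfer (Subtype.val) rfl (fun ω => rfl) (hTW κ)
  -- law of the pair
  have hmapPair : ∀ κ, Measure.map (pairS κ) μ = q.prod (ρ κ) := by
    intro κ
    have := (indepFun_iff_map_prod_eq_prod_map_map (hTmeas κ).aemeasurable
      (hpc_meas κ).aemeasurable).mp (hTpc κ)
    rw [hpairS_def]
    rw [this, hTlaw κ, hρ_def]
  -- the analytic lemmas
  have hone : ∀ κ, ∀ r : ℝ, 0 ≤ r →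
      Integrable (auxPhi r) (q.prod (ρ κ)) ∧ ∫ p, auxPhi r p ∂(q.prod (ρ κ)) = 0 := fun κ r hr =>
    aux_phi_int_one hq hqint (hint1 κ) (hint2 κ) (hcovρ κ) (hmeanρ κ) r hr
  have htwo : ∀ κ, Integrable (fun p => auxPhi t p * auxPhi s p) (q.prod (ρ κ)) ∧
      ∫ p, auxPhi t p * auxPhi s p ∂(q.prod (ρ κ))
        = ∫ τ, τ * (Real.exp (-|t - s| / τ) - Real.exp (-(t + s) / τ)) ∂q := fun κ =>
    aux_phi_int_two hq hqint (hint2 κ) (hcovρ κ) t s ht hs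
  -- Y in terms of auxPhi
  have hYcomp : ∀ κ (r : ℝ), Y κ r = (auxPhi r) ∘ (pairS κ) := by
    intro κ r
    funext ω
    rw [hY κ r ω]
    rfl
  -- integrability and means of Y
  have hYint : ∀ κ (r : ℝ), 0 ≤ r → Integrable (Y κ r) μ := by
    intro κ r hr
    rw [hYcomp κ r]
    refine (integrable_map_measure (auxPhi_measurable r).aestronglyMeasurable
      (hpairS_meas κ).aemeasurable).mp ?_
    rw [hmapPair κ]
    exact (hone κ r hr).1
  have hYmean : ∀ κ (r : ℝ), 0 ≤ r → ∫ ω, Y κ r ω ∂μ = 0 := by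
    intro κ r hr
    rw [hYcomp κ r]
    rw [show (∫ ω, ((auxPhi r) ∘ (pairS κ)) ω ∂μ) = ∫ p, auxPhi r p ∂(Measure.map (pairS κ) μ)
      from (integral_map (hpairS_meas κ).aemeasurable
        (auxPhi_measurable r).aestronglyMeasurable).symm]
    rw [hmapPair κ]
    exact (hone κ r hr).2
  -- diagonal terms
  have hdiagInt : ∀ κ, Integrable (fun ω => Y κ t ω * Y κ s ω) μ := by
    intro κ
    rw [show (fun ω => Y κ t ω * Y κ s ω)
        = (fun p => auxPhi t p * auxPhi s p) ∘ (pairS κ) by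
      funext ω; rw [hYcomp κ t, hYcomp κ s]; rfl]
    refine (integrable_map_measure
      ((auxPhi_measurable t).mul (auxPhi_measurable s)).aestronglyMeasurable
      (hpairS_meas κ).aemeasurable).mp ?_
    rw [hmapPair κ]
    exact (htwo κ).1
  have hdiagVal : ∀ κ, ∫ ω, Y κ t ω * Y κ s ω ∂μ
      = ∫ τ, τ * (Real.exp (-|t - s| / τ) - Real.exp (-(t + s) / τ)) ∂q := by
    intro κ
    rw [show (fun ω => Y κ t ω * Y κ s ω)
        = (fun p => auxPhi t p * auxPhi s p) ∘ (pairS κ) by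
      funext ω; rw [hYcomp κ t, hYcomp κ s]; rfl]
    rw [show (∫ ω, ((fun p => auxPhi t p * auxPhi s p) ∘ (pairS κ)) ω ∂μ)
        = ∫ p, auxPhi t p * auxPhi s p ∂(Measure.map (pairS κ) μ)
      from (integral_map (hpairS_meas κ).aemeasurable
        ((auxPhi_measurable t).mul (auxPhi_measurable s)).aestronglyMeasurable).symm]
    rw [hmapPair κ]
    exact (htwo κ).2
  -- independence of distinct pairs, in ContPath form
  have hpairIndep : ∀ κ l, κ ≠ l → IndepFun (pairS κ) (pairS l) μ := by
    intro κ l hκl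
    have hbase : IndepFun (fun ω => (T κ ω, fun u => W κ u ω))
        (fun ω => (T l ω, fun u => W l u ω)) μ := hindep.indepFun hκl
    have h1 := aux_indep_transfer (g := fun ω => (T l ω, fun u => W l u ω)) (g' := pairS l)
      (Prod.map id (Subtype.val : ContPath → ℝ → ℝ))
      (aux_comap_prodmap _ rfl) (fun ω => rfl) hbase
    exact (aux_indep_transfer (g := fun ω => (T κ ω, fun u => W κ u ω)) (g' := pairS κ)
      (Prod.map id (Subtype.val : ContPath → ℝ → ℝ))
      (aux_comap_prodmap _ rfl) (fun ω => rfl) h1.symm).symm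
  have hYindep : ∀ κ l, κ ≠ l → IndepFun (Y κ t) (Y l s) μ := by
    intro κ l hκl
    rw [hYcomp κ t, hYcomp l s]
    exact (hpairIndep κ l hκl).comp (auxPhi_measurable t) (auxPhi_measurable s)
  -- cross terms vanish
  have hcross : ∀ κ l, κ ≠ l → ∫ ω, Y κ t ω * Y l s ω ∂μ = 0 := by
    intro κ l hκl
    rw [(hYindep κ l hκl).integral_fun_mul_eq_mul_integral ((hYint κ t ht).1) ((hYint l s hs).1)]
    rw [hYmean κ t ht, zero_mul]
  -- all products integrable
  have hprodInt : ∀ κ l, Integrable (fun ω => Y κ t ω * Y l s ω) μ := by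
    intro κ l
    by_cases hκl : κ = l
    · subst hκl; exact hdiagInt κ
    · exact (hYindep κ l hκl).integrable_mul (hYint κ t ht) (hYint l s hs)
  -- the Λ independence
  set familyS : Ω → (Fin N → ℝ × ContPath) := fun ω κ => pairS κ ω with hfamilyS_def
  have hfamilyS_meas : Measurable familyS :=
    measurable_pi_lambda _ fun κ => hpairS_meas κ
  have hΛfamS : IndepFun Λ familyS μ := by
    refine aux_indep_transfer
      (fun (x : Fin N → ℝ × ContPath) (i : Fin N) => Prod.map id (Subtype.val) (x i))
      (aux_comap_pimap _ (aux_comap_prodmap _ rfl)) (fun ω => rfl) hΛindep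
  set g : (Fin N → ℝ × ContPath) → ℝ :=
    fun x => (∑ κ, auxPhi t (x κ)) * (∑ κ, auxPhi s (x κ)) with hg_def
  have hg_meas : Measurable g := by
    refine Measurable.mul ?_ ?_ <;>
      exact Finset.measurable_sum _ fun κ _ =>
        (auxPhi_measurable _).comp (measurable_pi_apply κ)
  have hΛG : IndepFun Λ (g ∘ familyS) μ := by
    have := hΛfamS.comp measurable_id hg_meas
    simpa [Function.id_comp] using this
  -- main computation
  have hstep1 : (∫ ω, Z t ω * Z s ω ∂μ)
      = ∫ ω, Λ ω * ((g ∘ familyS) ω) ∂μ := by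
    refine integral_congr_ae ?_
    filter_upwards [hΛnn] with ω hω
    rw [hZ t ω, hZ s ω]
    have hsum : ∀ r : ℝ, (∑ κ, Y κ r ω) = ∑ κ, auxPhi r (pairS κ ω) := by
      intro r
      refine Finset.sum_congr rfl fun κ _ => ?_
      rw [hYcomp κ r]; rfl
    have : (Real.sqrt (Λ ω) * ∑ κ, Y κ t ω) * (Real.sqrt (Λ ω) * ∑ κ, Y κ s ω)
        = (Real.sqrt (Λ ω) * Real.sqrt (Λ ω)) * ((∑ κ, Y κ t ω) * (∑ κ, Y κ s ω)) := by
      ring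
    rw [this, Real.mul_self_sqrt hω]
    simp only [Function.comp_apply, hg_def]
    rw [hsum t, hsum s]
  have hGexp : (g ∘ familyS) = fun ω => ∑ κ, ∑ l, Y κ t ω * Y l s ω := by
    funext ω
    simp only [Function.comp_apply, hg_def, hfamilyS_def]
    rw [Finset.sum_mul_sum]
    refine Finset.sum_congr rfl fun κ _ => Finset.sum_congr rfl fun l _ => ?_
    rw [hYcomp κ t, hYcomp l s]; rfl
  have hGval : ∫ ω, (g ∘ familyS) ω ∂μ
      = (N : ℝ) * ∫ τ, τ * (Real.exp (-|t - s| / τ) - Real.exp (-(t + s) / τ)) ∂q := by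
    rw [hGexp]
    rw [integral_finset_sum _ fun κ _ => integrable_finset_sum _ fun l _ => hprodInt κ l]
    have : ∀ κ : Fin N, ∫ ω, ∑ l, Y κ t ω * Y l s ω ∂μ
        = ∫ τ, τ * (Real.exp (-|t - s| / τ) - Real.exp (-(t + s) / τ)) ∂q := by
      intro κ
      rw [integral_finset_sum _ fun l _ => hprodInt κ l]
      have heach : ∀ l : Fin N, ∫ ω, Y κ t ω * Y l s ω ∂μ
          = if κ = l then
              ∫ τ, τ * (Real.exp (-|t - s| / τ) - Real.exp (-(t + s) / τ)) ∂q
            else 0 := by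
        intro l
        by_cases hκl : κ = l
        · subst hκl; rw [if_pos rfl]; exact hdiagVal κ
        · rw [if_neg hκl]; exact hcross κ l hκl
      rw [Finset.sum_congr rfl fun l _ => heach l]
      simp
    rw [Finset.sum_congr rfl fun κ _ => this κ, Finset.sum_const, Finset.card_univ,
      Fintype.card_fin, nsmul_eq_mul]
  rw [hstep1]
  rw [hΛG.integral_fun_mul_eq_mul_integral hΛmeas.aestronglyMeasurable
    (hg_meas.comp hfamilyS_meas).aestronglyMeasurable]
  rw [hGval]
  ring
end

section
/- In the fixed heterogeneous ensemble setting (parameters \tau^\kappa, m^\kappa > 0, M = \sum m^\kappa, \sigma^\kappa = \sigma_0/(m^\kappa)^2, \gamma^\kappa = m^\kappa/\tau^\kappa, independent Wiener processes W^\kappa, X^\kappa_t = e^{-t/\tau^\kappa} W^\kappa_{\sigma^\kappa\tau^\kappa(e^{2t/\tau^\kappa}-1)}, Z_t = \sum_{\kappa=1}^N (m^\kappa/M) X^\kappa_t), define for t > 0 the effective relaxation time \tau_{eff}(t) = [ (\sum_{\kappa} \tau^\kappa(1-e^{-2t/\tau^\kappa})) / (\sum_{\kappa} (1-e^{-2t/\tau^\kappa})/\tau^\kappa)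 ]^{1/2}. Then for every t > 0 the random variables \sum_{\kappa=1}^N \gamma^\kappa X^\kappa_t and (M/\tau_{eff}(t))\, Z_t have the same (centered Gaussian) law. This is the key identity by which the drift of the centre-of-mass like process is expressed as -Z_t/\tau_{eff}(t), making Z_t equal in distribution to the solution of a non-autonomous stochastic differential equation with time-dependent drift coefficient 1/\tau_{eff}(t). -/
open MeasureTheory ProbabilityTheory

section AuxGaussian

open Real
open scoped ENNReal NNReal

lemma aux_gaussian_conv_real {v₁ v₂ : ℝ≥0} (hv₁ : v₁ ≠ 0) (hv₂ : v₂ ≠ 0) (z : ℝ) :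
    ∫ x : ℝ, gaussianPDFReal 0 v₁ x * gaussianPDFReal 0 v₂ (z - x)
      = gaussianPDFReal 0 (v₁ + v₂) z := by
  have h1 : (0:ℝ) < v₁ := by exact_mod_cast hv₁.bot_lt
  have h2 : (0:ℝ) < v₂ := by exact_mod_cast hv₂.bot_lt
  have h12 : (0:ℝ) < (v₁:ℝ) + v₂ := by linarith
  set b : ℝ := ((v₁:ℝ) + v₂) / (2 * v₁ * v₂) with hb_def
  have hb : 0 < b := by positivity
  set c : ℝ := (v₁:ℝ) * z / ((v₁:ℝ) + v₂) with hc_def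
  have hint : (fun x : ℝ => gaussianPDFReal 0 v₁ x * gaussianPDFReal 0 v₂ (z - x))
      = fun x => ((√(2 * π * v₁))⁻¹ * (√(2 * π * v₂))⁻¹ * rexp (-(z - 0)^2 / (2 * ((v₁:ℝ) + v₂))))
          * rexp (-b * (x - c)^2) := by
    funext x
    simp only [gaussianPDFReal]
    rw [show (√(2 * π * ↑v₁))⁻¹ * rexp (-(x - 0) ^ 2 / (2 * ↑v₁)) *
        ((√(2 * π * ↑v₂))⁻¹ * rexp (-(z - x - 0) ^ 2 / (2 * ↑v₂)))
        = (√(2 * π * ↑v₁))⁻¹ * (√(2 * π * ↑v₂))⁻¹ *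
          (rexp (-(x - 0) ^ 2 / (2 * ↑v₁)) * rexp (-(z - x - 0) ^ 2 / (2 * ↑v₂))) by ring,
      ← Real.exp_add,
      show (√(2 * π * ↑v₁))⁻¹ * (√(2 * π * ↑v₂))⁻¹ * rexp (-(z - 0) ^ 2 / (2 * (↑v₁ + ↑v₂))) *
          rexp (-b * (x - c) ^ 2)
        = (√(2 * π * ↑v₁))⁻¹ * (√(2 * π * ↑v₂))⁻¹ *
          (rexp (-(z - 0) ^ 2 / (2 * (↑v₁ + ↑v₂))) * rexp (-b * (x - c) ^ 2)) by ring,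
      ← Real.exp_add]
    congr 1
    rw [hb_def, hc_def]
    congr 1
    field_simp
    ring
  rw [hint, MeasureTheory.integral_const_mul,
    integral_sub_right_eq_self (fun x => rexp (-b * x ^ 2)) c, integral_gaussian]
  rw [gaussianPDFReal]
  rw [show (√(2 * π * ↑v₁))⁻¹ * (√(2 * π * ↑v₂))⁻¹ * rexp (-(z - 0) ^ 2 / (2 * (↑v₁ + ↑v₂))) * √(π / b)
      = ((√(2 * π * ↑v₁))⁻¹ * (√(2 * π * ↑v₂))⁻¹ * √(π / b)) * rexp (-(z - 0) ^ 2 / (2 * (↑v₁ + ↑v₂))) by ring]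
  have hcoe : ((v₁ + v₂ : ℝ≥0) : ℝ) = (v₁:ℝ) + v₂ := by push_cast; ring
  rw [hcoe]
  congr 1
  rw [← Real.sqrt_inv, ← Real.sqrt_inv, ← Real.sqrt_inv, ← Real.sqrt_mul (by positivity),
    ← Real.sqrt_mul (by positivity)]
  congr 1
  rw [hb_def]
  field_simp

lemma aux_gaussian_conv_lintegral {v₁ v₂ : ℝ≥0} (hv₁ : v₁ ≠ 0) (hv₂ : v₂ ≠ 0) (z : ℝ) :
    ∫⁻ x : ℝ, gaussianPDF 0 v₁ x * gaussianPDF 0 v₂ (z - x)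
      = gaussianPDF 0 (v₁ + v₂) z := by
  have hintble : Integrable (fun x : ℝ => gaussianPDFReal 0 v₂ (z - x) * gaussianPDFReal 0 v₁ x) := by
    refine Integrable.bdd_mul (integrable_gaussianPDFReal 0 v₁)
      ((measurable_gaussianPDFReal 0 v₂).comp (measurable_const.sub measurable_id)).aestronglyMeasurable
      (c := (√(2 * π * v₂))⁻¹) (ae_of_all _ fun x => ?_)
    rw [Real.norm_eq_abs, abs_of_nonneg (gaussianPDFReal_nonneg _ _ _), gaussianPDFReal]
    have hv2 : (0:ℝ) < v₂ := by exact_mod_cast hv₂.bot_lt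
    have hexp : rexp (-(z - x - 0) ^ 2 / (2 * ↑v₂)) ≤ 1 := by
      rw [Real.exp_le_one_iff, neg_div]
      exact neg_nonpos.mpr (by positivity)
    calc (√(2 * π * ↑v₂))⁻¹ * rexp (-(z - x - 0) ^ 2 / (2 * ↑v₂))
        ≤ (√(2 * π * ↑v₂))⁻¹ * 1 := mul_le_mul_of_nonneg_left hexp (by positivity)
      _ = (√(2 * π * ↑v₂))⁻¹ := mul_one _
  have : (fun x : ℝ => gaussianPDF 0 v₁ x * gaussianPDF 0 v₂ (z - x))
      = fun x => ENNReal.ofReal (gaussianPDFReal 0 v₂ (z - x) * gaussianPDFReal 0 v₁ x) := by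
    funext x
    rw [gaussianPDF, gaussianPDF, ← ENNReal.ofReal_mul (gaussianPDFReal_nonneg _ _ _), mul_comm]
  rw [this, ← ofReal_integral_eq_lintegral_ofReal hintble
    (ae_of_all _ fun x => mul_nonneg (gaussianPDFReal_nonneg _ _ _) (gaussianPDFReal_nonneg _ _ _))]
  simp_rw [mul_comm (gaussianPDFReal 0 v₂ _)]
  rw [aux_gaussian_conv_real hv₁ hv₂ z]
  rfl

lemma aux_indepFun_gaussian_add {Ω : Type*} [MeasurableSpace Ω] {μ : Measure Ω}
    [IsProbabilityMeasure μ] {X Y : Ω → ℝ} (hX : Measurable X) (hY : Measurable Y)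
    (h : IndepFun X Y μ) {v₁ v₂ : ℝ≥0}
    (hXg : Measure.map X μ = gaussianReal 0 v₁) (hYg : Measure.map Y μ = gaussianReal 0 v₂) :
    Measure.map (fun ω => X ω + Y ω) μ = gaussianReal 0 (v₁ + v₂) := by
  by_cases hv₁ : v₁ = 0
  · subst hv₁
    have hX0 : X =ᵐ[μ] fun _ => 0 := by
      have h0 := Measure.map_apply (μ := μ) hX (MeasurableSet.singleton (0:ℝ)).compl
      rw [hXg] at h0
      simp only [gaussianReal_zero_var,
        Measure.dirac_apply' _ (MeasurableSet.singleton (0:ℝ)).compl] at h0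
      have hz : μ (X ⁻¹' {0}ᶜ) = 0 := by rw [← h0]; simp
      filter_upwards [measure_eq_zero_iff_ae_notMem.mp hz] with ω hω
      simpa using hω
    have heq : (fun ω => X ω + Y ω) =ᵐ[μ] Y := by
      filter_upwards [hX0] with ω hω; simp [hω]
    rw [Measure.map_congr heq, hYg, zero_add]
  · by_cases hv₂ : v₂ = 0
    · subst hv₂
      have hY0 : Y =ᵐ[μ] fun _ => 0 := by
        have h0 := Measure.map_apply (μ := μ) hY (MeasurableSet.singleton (0:ℝ)).compl
        rw [hYg] at h0
        simp only [gaussianReal_zero_var,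
          Measure.dirac_apply' _ (MeasurableSet.singleton (0:ℝ)).compl] at h0
        have hz : μ (Y ⁻¹' {0}ᶜ) = 0 := by rw [← h0]; simp
        filter_upwards [measure_eq_zero_iff_ae_notMem.mp hz] with ω hω
        simpa using hω
      have heq : (fun ω => X ω + Y ω) =ᵐ[μ] X := by
        filter_upwards [hY0] with ω hω; simp [hω]
      rw [Measure.map_congr heq, hXg, add_zero]
    · have hv₁₂ : v₁ + v₂ ≠ 0 := by simp [hv₁, hv₂]
      have hmap : Measure.map (fun ω => (X ω, Y ω)) μ = (Measure.map X μ).prod (Measure.map Y μ) :=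
        (indepFun_iff_map_prod_eq_prod_map_map hX.aemeasurable hY.aemeasurable).mp h
      have hcomp : Measure.map (fun ω => X ω + Y ω) μ
          = Measure.map (fun p : ℝ × ℝ => p.1 + p.2)
              ((gaussianReal 0 v₁).prod (gaussianReal 0 v₂)) := by
        rw [← hXg, ← hYg, ← hmap, Measure.map_map measurable_add (hX.prodMk hY)]
        rfl
      rw [hcomp]
      ext s hs
      rw [Measure.map_apply measurable_add hs, Measure.prod_apply (measurable_add hs)]
      have hsec : ∀ x : ℝ, (Prod.mk x ⁻¹' ((fun p : ℝ × ℝ => p.1 + p.2) ⁻¹' s))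
          = (fun y => x + y) ⁻¹' s := fun x => rfl
      simp_rw [hsec]
      have hmapconst : ∀ x : ℝ, gaussianReal 0 v₂ ((fun y => x + y) ⁻¹' s)
          = ∫⁻ z in s, gaussianPDF 0 v₂ (z - x) := by
        intro x
        have h1 : gaussianReal 0 v₂ ((fun y => x + y) ⁻¹' s)
            = (gaussianReal 0 v₂).map (fun y => x + y) s :=
          (Measure.map_apply (measurable_const_add x) hs).symm
        rw [h1, gaussianReal_map_const_add, zero_add, gaussianReal_apply _ hv₂ s]
        refine setLIntegral_congr_fun hs (fun z _ => ?_)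
        rw [gaussianPDF, gaussianPDF, gaussianPDFReal_sub, zero_add]
      simp_rw [hmapconst]
      rw [lintegral_lintegral_swap (f := fun x z => gaussianPDF 0 v₂ (z - x)) (by
        exact (((measurable_gaussianPDF 0 v₂).comp
          (measurable_snd.sub measurable_fst))).aemeasurable)]
      have hinner : ∀ z : ℝ, (∫⁻ x, gaussianPDF 0 v₂ (z - x) ∂(gaussianReal 0 v₁))
          = gaussianPDF 0 (v₁ + v₂) z := by
        intro z
        have hswap := lintegral_withDensity_eq_lintegral_mul (volume)
          (measurable_gaussianPDF 0 v₁) (g := fun x => gaussianPDF 0 v₂ (z - x))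
          (by exact (measurable_gaussianPDF 0 v₂).comp (measurable_const.sub measurable_id))
        rw [gaussianReal_of_var_ne_zero _ hv₁, hswap]
        simp_rw [Pi.mul_apply]
        exact aux_gaussian_conv_lintegral hv₁ hv₂ z
      simp_rw [hinner]
      rw [← gaussianReal_apply _ hv₁₂ s]

lemma aux_iIndepFun_gaussian_sum {Ω : Type*} [MeasurableSpace Ω] {μ : Measure Ω}
    [IsProbabilityMeasure μ] {n : ℕ} {Y : Fin n → Ω → ℝ} (hmeas : ∀ i, Measurable (Y i))
    (hind : iIndepFun Y μ) {v : Fin n → ℝ≥0}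
    (hY : ∀ i, Measure.map (Y i) μ = gaussianReal 0 (v i)) (s : Finset (Fin n)) :
    Measure.map (fun ω => ∑ i ∈ s, Y i ω) μ = gaussianReal 0 (∑ i ∈ s, v i) := by
  classical
  induction s using Finset.induction_on with
  | empty =>
      simp only [Finset.sum_empty]
      rw [show (fun _ : Ω => (0:ℝ)) = fun _ => (0:ℝ) from rfl, Measure.map_const,
        gaussianReal_zero_var]
      simp
  | insert i s' hi ih =>
      simp only [Finset.sum_insert hi]
      have hindep2 : IndepFun (Y i) (fun ω => ∑ j ∈ s', Y j ω) μ := by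
        have := (hind.indepFun_finsetSum_of_notMem hmeas hi).symm
        have hfun : (∑ j ∈ s', Y j) = fun ω => ∑ j ∈ s', Y j ω := by
          funext ω; simp [Finset.sum_apply]
        rwa [hfun] at this
      exact aux_indepFun_gaussian_add (hmeas i)
        (by exact Finset.measurable_sum s' fun j _ => hmeas j) hindep2 (hY i) ih

end AuxGaussian


/-- Key identity behind the non-autonomous SDE for the centre-of-mass like process: in the
fixed heterogeneous ensemble (`τ^κ, m^κ > 0`, `M = ∑ m^κ`, `σ^κ = σ₀/(m^κ)²`,
`γ^κ = m^κ/τ^κ`, independent Wiener processes,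
`X^κ_t = e^{-t/τ^κ} W^κ_{σ^κ τ^κ (e^{2t/τ^κ}-1)}`, `Z_t = ∑_κ (m^κ/M) X^κ_t`), with the
effective relaxation time
`τ_eff(t) = [(∑_κ τ^κ (1-e^{-2t/τ^κ})) / (∑_κ (1-e^{-2t/τ^κ})/τ^κ)]^{1/2}`,
for every `t > 0` the random variables `∑_κ γ^κ X^κ_t` and `(M/τ_eff(t)) Z_t` have the
same (centered Gaussian) law. -/
theorem drift_effective_relaxation_time
    {Ω : Type*} [MeasurableSpace Ω] (μ : Measure Ω) [IsProbabilityMeasure μ]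
    (N : ℕ) (hN : 0 < N)
    (τ m : Fin N → ℝ) (hτ : ∀ κ, 0 < τ κ) (hm : ∀ κ, 0 < m κ)
    (σ₀ : ℝ) (hσ₀ : 0 < σ₀)
    (M : ℝ) (hM : M = ∑ κ, m κ)
    (σ : Fin N → ℝ) (hσ : ∀ κ, σ κ = σ₀ / (m κ) ^ 2)
    (γ : Fin N → ℝ) (hγ : ∀ κ, γ κ = m κ / τ κ)
    (W : Fin N → ℝ → Ω → ℝ)
    (hWmeas : ∀ κ u, Measurable (W κ u))
    -- each `W^κ` is a centered Gaussian process: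
    (hWgauss : ∀ κ u, 0 ≤ u → Measure.map (W κ u) μ = gaussianReal 0 (Real.toNNReal u))
    (hWcov : ∀ κ u v, 0 ≤ u → 0 ≤ v → ∫ ω, W κ u ω * W κ v ω ∂μ = min u v)
    -- the Wiener processes are independent:
    (hindep : iIndepFun (fun κ ω => fun u => W κ u ω) μ)
    (X : Fin N → ℝ → Ω → ℝ)
    (hX : ∀ κ t ω, X κ t ω =
      Real.exp (-t / τ κ) * W κ (σ κ * τ κ * (Real.exp (2 * t / τ κ) - 1)) ω)
    (Z : ℝ → Ω → ℝ)
    (hZ : ∀ t ω, Z t ω = ∑ κ, (m κ / M) * X κ t ω)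
    (τeff : ℝ → ℝ)
    (hτeff : ∀ t, τeff t = Real.sqrt
      ((∑ κ, τ κ * (1 - Real.exp (-2 * t / τ κ))) /
        (∑ κ, (1 - Real.exp (-2 * t / τ κ)) / τ κ))) :
    ∀ t : ℝ, 0 < t →
      Measure.map (fun ω => ∑ κ, γ κ * X κ t ω) μ =
        Measure.map (fun ω => (M / τeff t) * Z t ω) μ := by
  intro t ht
  haveI : Nonempty (Fin N) := Fin.pos_iff_nonempty.mp hN
  have hτne : ∀ κ, τ κ ≠ 0 := fun κ => (hτ κ).ne'
  have hmne : ∀ κ, m κ ≠ 0 := fun κ => (hm κ).ne'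
  have hMpos : 0 < M := by
    rw [hM]; exact Finset.sum_pos (fun κ _ => hm κ) Finset.univ_nonempty
  have hu : ∀ κ, 0 ≤ σ κ * τ κ * (Real.exp (2 * t / τ κ) - 1) := by
    intro κ
    have h1 : (1:ℝ) ≤ Real.exp (2 * t / τ κ) := by
      rw [← Real.exp_zero]
      exact Real.exp_le_exp.mpr (div_nonneg (by linarith) (hτ κ).le)
    have hσpos : 0 < σ κ := by rw [hσ]; exact div_pos hσ₀ (pow_pos (hm κ) 2)
    exact mul_nonneg (mul_nonneg hσpos.le (hτ κ).le) (by linarith)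
  -- the key generic law
  have hkey : ∀ c : Fin N → ℝ,
      Measure.map (fun ω => ∑ κ, c κ * W κ (σ κ * τ κ * (Real.exp (2 * t / τ κ) - 1)) ω) μ
        = gaussianReal 0 (∑ κ, Real.toNNReal ((c κ)^2)
            * Real.toNNReal (σ κ * τ κ * (Real.exp (2 * t / τ κ) - 1))) := by
    intro c
    refine aux_iIndepFun_gaussian_sum (fun κ => ((hWmeas κ _).const_mul _)) ?_ ?_ Finset.univ
    · have := hindep.comp
        (fun κ (f : ℝ → ℝ) => c κ * f (σ κ * τ κ * (Real.exp (2 * t / τ κ) - 1)))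
        (fun κ => (measurable_pi_apply _).const_mul _)
      exact this
    · intro κ
      have hcomp : (fun ω => c κ * W κ (σ κ * τ κ * (Real.exp (2 * t / τ κ) - 1)) ω)
          = (fun x => c κ * x) ∘ (W κ (σ κ * τ κ * (Real.exp (2 * t / τ κ) - 1))) := rfl
      rw [hcomp, ← Measure.map_map (measurable_const_mul _) (hWmeas κ _),
        hWgauss κ _ (hu κ), gaussianReal_map_const_mul, mul_zero]
      congr 1
      apply NNReal.coe_injective
      simp [Real.coe_toNNReal _ (sq_nonneg (c κ))]
  -- rewrite both sides as such sums
  have hL : (fun ω => ∑ κ, γ κ * X κ t ω)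
      = fun ω => ∑ κ, (γ κ * Real.exp (-t / τ κ))
          * W κ (σ κ * τ κ * (Real.exp (2 * t / τ κ) - 1)) ω := by
    funext ω
    refine Finset.sum_congr rfl fun κ _ => ?_
    rw [hX]; ring
  have hR : (fun ω => (M / τeff t) * Z t ω)
      = fun ω => ∑ κ, ((M / τeff t) * (m κ / M) * Real.exp (-t / τ κ))
          * W κ (σ κ * τ κ * (Real.exp (2 * t / τ κ) - 1)) ω := by
    funext ω
    rw [hZ, Finset.mul_sum]
    refine Finset.sum_congr rfl fun κ _ => ?_
    rw [hX]; ring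
  rw [hL, hR, hkey, hkey]
  congr 1
  -- equality of variances
  apply NNReal.coe_injective
  push_cast
  have hucoe : ∀ κ,
      ((Real.toNNReal (σ κ * τ κ * (Real.exp (2 * t / τ κ) - 1)) : NNReal) : ℝ)
        = σ κ * τ κ * (Real.exp (2 * t / τ κ) - 1) := fun κ => Real.coe_toNNReal _ (hu κ)
  have hc2 : ∀ x : ℝ, ((Real.toNNReal (x ^ 2) : NNReal) : ℝ) = x ^ 2 :=
    fun x => Real.coe_toNNReal _ (sq_nonneg x)
  simp_rw [hucoe, hc2]
  -- positivity of the sums A, B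
  have hE : ∀ κ, Real.exp (-2 * t / τ κ) < 1 := by
    intro κ
    rw [Real.exp_lt_one_iff]
    have h2t : 0 < 2 * t / τ κ := div_pos (by linarith) (hτ κ)
    have : -2 * t / τ κ = -(2 * t / τ κ) := by ring
    linarith
  have hA : 0 < ∑ κ, τ κ * (1 - Real.exp (-2 * t / τ κ)) :=
    Finset.sum_pos (fun κ _ => mul_pos (hτ κ) (by linarith [hE κ])) Finset.univ_nonempty
  have hB : 0 < ∑ κ, (1 - Real.exp (-2 * t / τ κ)) / τ κ :=
    Finset.sum_pos (fun κ _ => div_pos (by linarith [hE κ]) (hτ κ)) Finset.univ_nonempty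
  have hτepos : 0 < τeff t := by
    rw [hτeff]; exact Real.sqrt_pos.mpr (div_pos hA hB)
  have hτesq : (τeff t) ^ 2
      = (∑ κ, τ κ * (1 - Real.exp (-2 * t / τ κ))) /
        (∑ κ, (1 - Real.exp (-2 * t / τ κ)) / τ κ) := by
    rw [hτeff]; exact Real.sq_sqrt (le_of_lt (div_pos hA hB))
  -- per-term identities
  have hexp2 : ∀ κ, Real.exp (-t / τ κ) ^ 2 = Real.exp (-2 * t / τ κ) := by
    intro κ
    rw [sq, ← Real.exp_add, show -t / τ κ + -t / τ κ = -2 * t / τ κ by ring]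
  have hEP : ∀ κ, Real.exp (-2 * t / τ κ) * Real.exp (2 * t / τ κ) = 1 := by
    intro κ
    rw [← Real.exp_add]
    rw [show -2 * t / τ κ + 2 * t / τ κ = 0 by ring, Real.exp_zero]
  have hterm1 : ∀ κ, (γ κ * Real.exp (-t / τ κ)) ^ 2
        * (σ κ * τ κ * (Real.exp (2 * t / τ κ) - 1))
      = σ₀ * ((1 - Real.exp (-2 * t / τ κ)) / τ κ) := by
    intro κ
    have h1 : Real.exp (-2 * t / τ κ) * (Real.exp (2 * t / τ κ) - 1)
        = 1 - Real.exp (-2 * t / τ κ) := by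
      rw [mul_sub, hEP κ]; ring
    rw [mul_pow, hexp2, hγ, hσ, show (1 - Real.exp (-2 * t / τ κ))
      = Real.exp (-2 * t / τ κ) * (Real.exp (2 * t / τ κ) - 1) from h1.symm]
    field_simp [hmne κ, hτne κ]
  have hterm2 : ∀ κ, ((M / τeff t) * (m κ / M) * Real.exp (-t / τ κ)) ^ 2
        * (σ κ * τ κ * (Real.exp (2 * t / τ κ) - 1))
      = (σ₀ / (τeff t) ^ 2) * (τ κ * (1 - Real.exp (-2 * t / τ κ))) := by
    intro κ
    have h1 : Real.exp (-2 * t / τ κ) * (Real.exp (2 * t / τ κ) - 1)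
        = 1 - Real.exp (-2 * t / τ κ) := by
      rw [mul_sub, hEP κ]; ring
    have hMτ : M / τeff t * (m κ / M) = m κ / τeff t := by
      field_simp [hMpos.ne', hτepos.ne']
    rw [hMτ, mul_pow, hexp2, hσ, show (1 - Real.exp (-2 * t / τ κ))
      = Real.exp (-2 * t / τ κ) * (Real.exp (2 * t / τ κ) - 1) from h1.symm]
    field_simp [hmne κ, hτne κ, hτepos.ne']
  calc ∑ κ, (γ κ * Real.exp (-t / τ κ)) ^ 2 * (σ κ * τ κ * (Real.exp (2 * t / τ κ) - 1))
      = ∑ κ, σ₀ * ((1 - Real.exp (-2 * t / τ κ)) / τ κ) :=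
        Finset.sum_congr rfl fun κ _ => hterm1 κ
    _ = σ₀ * ∑ κ, (1 - Real.exp (-2 * t / τ κ)) / τ κ := by rw [Finset.mul_sum]
    _ = (σ₀ / (τeff t) ^ 2) * ∑ κ, τ κ * (1 - Real.exp (-2 * t / τ κ)) := by
        have hAB : ∀ A B : ℝ, 0 < A → 0 < B → σ₀ * B = σ₀ / (A / B) * A := by
          intro A B hA' hB'
          field_simp
        rw [hτesq]
        exact hAB _ _ hA hB
    _ = ∑ κ, (σ₀ / (τeff t) ^ 2) * (τ κ * (1 - Real.exp (-2 * t / τ κ))) := by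
        rw [Finset.mul_sum]
    _ = ∑ κ, ((M / τeff t) * (m κ / M) * Real.exp (-t / τ κ)) ^ 2
          * (σ κ * τ κ * (Real.exp (2 * t / τ κ) - 1)) :=
        Finset.sum_congr rfl fun κ _ => (hterm2 κ).symm
end
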